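/- Under the substitution u ↦ −1/(4u(u+1)), X ↦ X(2u+1)^2/(16(u(u+1))^4), Y ↦ Y(2u+1)^3/(64(u(u+1))^6), the Weierstrass equation Y^2 = 4X^3 − g2(tu)(u(u−1))^2 X − g3(tu)(u(u−1))^3 is transformed into Y^2 = 4X^3 − g2(−t/(4u(u+1)))(u(u+1))^4 X − g3(−t/(4u(u+1)))(u(u+1))^6, for any rational functions g2, g3. -/

import Mathlib

/-- Under `u ↦ −1/(4u(u+1))`, `X ↦ X(2u+1)²/(16(u(u+1))⁴)`,
`Y ↦ Y(2u+1)³/(64(u(u+1))⁶)`, the Weierstrass equation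
`Y² = 4X³ − g2(tu)(u(u−1))² X − g3(tu)(u(u−1))³` is transformed into
`Y² = 4X³ − g2(−t/(4u(u+1)))(u(u+1))⁴ X − g3(−t/(4u(u+1)))(u(u+1))⁶`,
for any rational functions `g2, g3`. -/
theorem pure_twist_to_mixed_twist (g2 g3 : ℝ → ℝ) (t u X Y : ℝ)
    (hu : u ≠ 0) (hu1 : u + 1 ≠ 0) (hu2 : 2*u + 1 ≠ 0) :
    ((Y * (2*u + 1)^3 / (64 * (u*(u + 1))^6)) ^ 2
        = 4 * (X * (2*u + 1)^2 / (16 * (u*(u + 1))^4)) ^ 3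
          - g2 (t * (-1 / (4*u*(u + 1))))
              * ((-1 / (4*u*(u + 1))) * ((-1 / (4*u*(u + 1))) - 1)) ^ 2
              * (X * (2*u + 1)^2 / (16 * (u*(u + 1))^4))
          - g3 (t * (-1 / (4*u*(u + 1))))
              * ((-1 / (4*u*(u + 1))) * ((-1 / (4*u*(u + 1))) - 1)) ^ 3)
    ↔ (Y ^ 2 = 4 * X^3
        - g2 (-t / (4*u*(u + 1))) * (u*(u + 1))^4 * X
        - g3 (-t / (4*u*(u + 1))) * (u*(u + 1))^6) := by
  have harg : t * (-1 / (4*u*(u + 1))) = -t / (4*u*(u + 1)) := by ring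
  rw [harg]
  set A := g2 (-t / (4*u*(u + 1))) with hA
  set B := g3 (-t / (4*u*(u + 1))) with hB
  have hC : (2*u+1)^6 * 16^9 * (u*(u+1))^26 ≠ 0 := by
    have := pow_ne_zero 6 hu2
    have := pow_ne_zero 26 (mul_ne_zero hu hu1)
    positivity
  constructor <;> intro h
  · field_simp at h
    refine mul_left_cancel₀ hC ?_
    linear_combination (16^3 * (u*(u+1))^26) * h
  · field_simp
    linear_combination ((2*u+1)^6 * 4^6 * 16^3) * h
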